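/- The binary code of length 24 generated by the block matrix [[G8, 0, G8], [0, G8, G8], [G8', G8', G8']] — where G8 generates the (8,4,4) Reed–Muller code and G8' is a column-permuted copy of G8 such that G8 and G8' share no common weight-4 codewords — has dimension 12 and minimum Hamming distance 8 (i.e., it is a (24,12,8) extended Golay code). -/

import Mathlib

open Matrix

/-- Generator matrix of the (8,4,4) Reed–Muller code. -/
def G8 : Matrix (Fin 4) (Fin 8) (ZMod 2) :=
  !![1,1,1,1,0,0,0,0; 1,1,0,0,1,1,0,0; 1,0,1,0,1,0,1,0; 1,1,1,1,1,1,1,1]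

/-- Column-permuted copy of G8 (permutation π3). -/
def G8' : Matrix (Fin 4) (Fin 8) (ZMod 2) :=
  !![0,1,1,1,1,0,0,0; 1,0,0,1,1,1,0,0; 1,1,0,0,1,0,1,0; 1,1,1,1,1,1,1,1]

/-- Assemble a 12×24 matrix from a 3×3 array of 4×8 blocks. -/
def build (M : Fin 3 → Fin 3 → Matrix (Fin 4) (Fin 8) (ZMod 2)) :
    Matrix (Fin 12) (Fin 24) (ZMod 2) :=
  Matrix.of fun i j =>
    M ⟨i.1 / 4, by have := i.2; omega⟩ ⟨j.1 / 8, by have := j.2; omega⟩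
      ⟨i.1 % 4, by omega⟩ ⟨j.1 % 8, by omega⟩

/-- Assemble a 24×24 matrix from a 3×3 array of 8×8 blocks. -/
def build8 (M : Fin 3 → Fin 3 → Matrix (Fin 8) (Fin 8) (ZMod 2)) :
    Matrix (Fin 24) (Fin 24) (ZMod 2) :=
  Matrix.of fun i j =>
    M ⟨i.1 / 8, by have := i.2; omega⟩ ⟨j.1 / 8, by have := j.2; omega⟩
      ⟨i.1 % 8, by omega⟩ ⟨j.1 % 8, by omega⟩

/-- The binary linear code generated by (the rows of) a matrix. -/
def code {k n : ℕ} (M : Matrix (Fin k) (Fin n) (ZMod 2)) :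
    Submodule (ZMod 2) (Fin n → ZMod 2) :=
  LinearMap.range M.vecMulLinear

/-- The cubing-construction generator matrix of the (24,12,8) extended Golay code. -/
def Ghat : Matrix (Fin 12) (Fin 24) (ZMod 2) :=
  build ![![G8, 0, G8], ![0, G8, G8], ![G8', G8', G8']]

/-- The 2×2 polar kernel. -/
def F2k : Matrix (Fin 2) (Fin 2) (ZMod 2) := !![1,0; 1,1]

/-- F8 = F2 ⊗ F2 ⊗ F2 (Kronecker product), written entrywise. -/
def F8 : Matrix (Fin 8) (Fin 8) (ZMod 2) :=
  Matrix.of fun i j =>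
    F2k ⟨i.1 / 4, by have := i.2; omega⟩ ⟨j.1 / 4, by have := j.2; omega⟩ *
    F2k ⟨i.1 / 2 % 2, by omega⟩ ⟨j.1 / 2 % 2, by omega⟩ *
    F2k ⟨i.1 % 2, by omega⟩ ⟨j.1 % 2, by omega⟩

/-- The 8×8 convolution matrix T of Proposition 1: identity plus extra ones at
(one-based) positions (2,3), (2,7), (3,4), (3,6), (4,5). -/
def T8 : Matrix (Fin 8) (Fin 8) (ZMod 2) :=
  Matrix.of fun i j =>
    if i = j ∨ (i = 1 ∧ j = 2) ∨ (i = 1 ∧ j = 6) ∨ (i = 2 ∧ j = 3) ∨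
       (i = 2 ∧ j = 5) ∨ (i = 3 ∧ j = 4) then 1 else 0

-- glue
def glue (x y z : Fin 8 → ZMod 2) : Fin 24 → ZMod 2 := fun j =>
  if h : j.1 < 8 then x ⟨j.1, h⟩
  else if h2 : j.1 < 16 then y ⟨j.1 - 8, by omega⟩
  else z ⟨j.1 - 16, by omega⟩

def glueL : ((Fin 8 → ZMod 2) × ((Fin 8 → ZMod 2) × (Fin 8 → ZMod 2))) →ₗ[ZMod 2]
    (Fin 24 → ZMod 2) where
  toFun p := glue p.1 p.2.1 p.2.2
  map_add' p q := by
    funext j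
    simp only [Pi.add_apply, Prod.fst_add, Prod.snd_add, glue]
    split_ifs <;> simp
  map_smul' r p := by
    funext j
    simp only [Pi.smul_apply, Prod.smul_fst, Prod.smul_snd, glue, RingHom.id_apply]
    split_ifs <;> simp

lemma sum_split {M : Type*} [AddCommMonoid M] {m n p : ℕ} (g : Fin (m + (n + p)) → M) :
    ∑ i, g i = (∑ i : Fin m, g (Fin.castAdd _ i)) +
      ((∑ i : Fin n, g (Fin.natAdd m (Fin.castAdd p i))) +
       (∑ i : Fin p, g (Fin.natAdd m (Fin.natAdd n i)))) := by
  rw [← Equiv.sum_comp (finSumFinEquiv (m := m) (n := n + p)) g, Fintype.sum_sum_type,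
    ← Equiv.sum_comp (finSumFinEquiv (m := n) (n := p))
      (fun a => g (finSumFinEquiv (Sum.inr a))), Fintype.sum_sum_type]
  simp [finSumFinEquiv_apply_left, finSumFinEquiv_apply_right]

lemma vecMul_eq_sum' {k n : ℕ} (c : Fin k → ZMod 2) (M : Matrix (Fin k) (Fin n) (ZMod 2)) :
    M.vecMul c = ∑ i, c i • M i := by
  funext j
  simp [Matrix.vecMul, dotProduct, Finset.sum_apply, Pi.smul_apply, smul_eq_mul]


def i1 (i : Fin 4) : Fin 12 := Fin.castAdd 8 i
def i2 (i : Fin 4) : Fin 12 := Fin.natAdd 4 (Fin.castAdd 4 i)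
def i3 (i : Fin 4) : Fin 12 := Fin.natAdd 4 (Fin.natAdd 4 i)

set_option maxHeartbeats 1600000 in
lemma row1 : ∀ i : Fin 4, Ghat (i1 i) = glueL (G8 i, 0, G8 i) := by decide
set_option maxHeartbeats 1600000 in
lemma row2 : ∀ i : Fin 4, Ghat (i2 i) = glueL (0, G8 i, G8 i) := by decide
set_option maxHeartbeats 1600000 in
lemma row3 : ∀ i : Fin 4, Ghat (i3 i) = glueL (G8' i, G8' i, G8' i) := by decide

set_option maxHeartbeats 1600000 in
lemma decomp (c : Fin 12 → ZMod 2) :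
    Ghat.vecMul c =
      glue (G8.vecMul (c ∘ i1) + G8'.vecMul (c ∘ i3))
           (G8.vecMul (c ∘ i2) + G8'.vecMul (c ∘ i3))
           (G8.vecMul (c ∘ i1) + G8.vecMul (c ∘ i2) + G8'.vecMul (c ∘ i3)) := by
  have key : Ghat.vecMul c = glueL
      (G8.vecMul (c ∘ i1) + G8'.vecMul (c ∘ i3),
       G8.vecMul (c ∘ i2) + G8'.vecMul (c ∘ i3),
       G8.vecMul (c ∘ i1) + G8.vecMul (c ∘ i2) + G8'.vecMul (c ∘ i3)) := by
    rw [vecMul_eq_sum' c Ghat, sum_split (m := 4) (n := 4) (p := 4)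
      (fun i => c i • Ghat i)]
    have r1 : ∀ i : Fin 4, Ghat (Fin.castAdd 8 i) = glueL (G8 i, 0, G8 i) := row1
    have r2 : ∀ i : Fin 4, Ghat (Fin.natAdd 4 (Fin.castAdd 4 i)) = glueL (0, G8 i, G8 i) := row2
    have r3 : ∀ i : Fin 4, Ghat (Fin.natAdd 4 (Fin.natAdd 4 i)) = glueL (G8' i, G8' i, G8' i) := row3
    simp_rw [r1, r2, r3, ← _root_.map_smul, ← _root_.map_sum, ← _root_.map_add]
    congr 1
    refine Prod.ext ?_ (Prod.ext ?_ ?_) <;>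
      simp [Prod.fst_sum, Prod.snd_sum, vecMul_eq_sum', Function.comp, i1, i2, i3] <;>
      abel
  rw [key]; rfl

lemma glue_at1 (x y z : Fin 8 → ZMod 2) (j : Fin 8) :
    glue x y z (Fin.castAdd 16 j) = x j := by
  have h : (Fin.castAdd 16 j).1 = j.1 := rfl
  simp only [glue, h]
  rw [dif_pos j.2]

lemma glue_at2 (x y z : Fin 8 → ZMod 2) (j : Fin 8) :
    glue x y z (Fin.natAdd 8 (Fin.castAdd 8 j)) = y j := by
  have h : (Fin.natAdd 8 (Fin.castAdd 8 j)).1 = 8 + j.1 := rfl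
  have h8 : j.1 < 8 := j.2
  simp only [glue, h]
  rw [dif_neg (by omega), dif_pos (by omega)]
  congr 1
  exact Fin.ext (by simp)

lemma glue_at3 (x y z : Fin 8 → ZMod 2) (j : Fin 8) :
    glue x y z (Fin.natAdd 8 (Fin.natAdd 8 j)) = z j := by
  have h : (Fin.natAdd 8 (Fin.natAdd 8 j)).1 = 8 + (8 + j.1) := rfl
  have h8 : j.1 < 8 := j.2
  simp only [glue, h]
  rw [dif_neg (by omega), dif_neg (by omega)]
  congr 1
  exact Fin.ext (by simp; omega)

lemma hn_glue (x y z : Fin 8 → ZMod 2) :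
    hammingNorm (glue x y z) = hammingNorm x + hammingNorm y + hammingNorm z := by
  simp only [hammingNorm, Finset.card_filter]
  rw [sum_split (m := 8) (n := 8) (p := 8)
    (fun j => if glue x y z j ≠ 0 then 1 else 0)]
  have e1 : (∑ j : Fin 8, if glue x y z (Fin.castAdd 16 j) ≠ 0 then 1 else 0)
      = ∑ j : Fin 8, if x j ≠ 0 then 1 else 0 :=
    Finset.sum_congr rfl fun j _ => by rw [glue_at1]
  have e2 : (∑ j : Fin 8, if glue x y z (Fin.natAdd 8 (Fin.castAdd 8 j)) ≠ 0 then 1 else 0)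
      = ∑ j : Fin 8, if y j ≠ 0 then 1 else 0 :=
    Finset.sum_congr rfl fun j _ => by rw [glue_at2]
  have e3 : (∑ j : Fin 8, if glue x y z (Fin.natAdd 8 (Fin.natAdd 8 j)) ≠ 0 then 1 else 0)
      = ∑ j : Fin 8, if z j ≠ 0 then 1 else 0 :=
    Finset.sum_congr rfl fun j _ => by rw [glue_at3]
  rw [e1, e2, e3]
  omega

def S8 : List (Fin 8 → ZMod 2) := [
  ![0,0,0,0,0,0,0,0], ![1,1,1,1,0,0,0,0], ![1,1,0,0,1,1,0,0], ![0,0,1,1,1,1,0,0],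
  ![1,0,1,0,1,0,1,0], ![0,1,0,1,1,0,1,0], ![0,1,1,0,0,1,1,0], ![1,0,0,1,0,1,1,0],
  ![1,1,1,1,1,1,1,1], ![0,0,0,0,1,1,1,1], ![0,0,1,1,0,0,1,1], ![1,1,0,0,0,0,1,1],
  ![0,1,0,1,0,1,0,1], ![1,0,1,0,0,1,0,1], ![1,0,0,1,1,0,0,1], ![0,1,1,0,1,0,0,1]]
def S8p : List (Fin 8 → ZMod 2) := [
  ![0,0,0,0,0,0,0,0], ![0,1,1,1,1,0,0,0], ![1,0,0,1,1,1,0,0], ![1,1,1,0,0,1,0,0],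
  ![1,1,0,0,1,0,1,0], ![1,0,1,1,0,0,1,0], ![0,1,0,1,0,1,1,0], ![0,0,1,0,1,1,1,0],
  ![1,1,1,1,1,1,1,1], ![1,0,0,0,0,1,1,1], ![0,1,1,0,0,0,1,1], ![0,0,0,1,1,0,1,1],
  ![0,0,1,1,0,1,0,1], ![0,1,0,0,1,1,0,1], ![1,0,1,0,1,0,0,1], ![1,1,0,1,0,0,0,1]]

set_option maxHeartbeats 1600000 in
lemma mem_S8 : ∀ a : Fin 4 → ZMod 2, G8.vecMul a ∈ S8 := by decide

set_option maxHeartbeats 1600000 in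
lemma mem_S8p : ∀ a : Fin 4 → ZMod 2, G8'.vecMul a ∈ S8p := by decide

set_option maxHeartbeats 8000000 in
set_option maxRecDepth 10000 in
lemma bigcheck : ∀ u ∈ S8, ∀ v ∈ S8, ∀ w ∈ S8p,
    hammingNorm (u+w) + hammingNorm (v+w) + hammingNorm (u+v+w) ≠ 0 →
    8 ≤ hammingNorm (u+w) + hammingNorm (v+w) + hammingNorm (u+v+w) := by decide

set_option maxHeartbeats 1600000 in
lemma injG8 : ∀ a : Fin 4 → ZMod 2, G8.vecMul a = 0 → a = 0 := by decide
set_option maxHeartbeats 1600000 in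
lemma injG8p : ∀ a : Fin 4 → ZMod 2, G8'.vecMul a = 0 → a = 0 := by decide
lemma z3 : ∀ x y z : ZMod 2, x + z = 0 → y + z = 0 → x + y + z = 0 →
    x = 0 ∧ y = 0 ∧ z = 0 := by decide
lemma cover : ∀ i : Fin 12, (∃ t, i = i1 t) ∨ (∃ t, i = i2 t) ∨ ∃ t, i = i3 t := by decide

lemma vecMul_zero_imp (c : Fin 12 → ZMod 2) (h0 : Ghat.vecMul c = 0) : c = 0 := by
  rw [decomp c] at h0
  have hU : G8.vecMul (c ∘ i1) + G8'.vecMul (c ∘ i3) = 0 := by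
    funext j; have := congrFun h0 (Fin.castAdd 16 j); rw [glue_at1] at this; exact this
  have hV : G8.vecMul (c ∘ i2) + G8'.vecMul (c ∘ i3) = 0 := by
    funext j
    have := congrFun h0 (Fin.natAdd 8 (Fin.castAdd 8 j)); rw [glue_at2] at this; exact this
  have hW : G8.vecMul (c ∘ i1) + G8.vecMul (c ∘ i2) + G8'.vecMul (c ∘ i3) = 0 := by
    funext j
    have := congrFun h0 (Fin.natAdd 8 (Fin.natAdd 8 j)); rw [glue_at3] at this; exact this
  have hu : G8.vecMul (c ∘ i1) = 0 := by
    funext j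
    exact (z3 _ _ _ (congrFun hU j) (congrFun hV j) (congrFun hW j)).1
  have hv : G8.vecMul (c ∘ i2) = 0 := by
    funext j
    exact (z3 _ _ _ (congrFun hU j) (congrFun hV j) (congrFun hW j)).2.1
  have hw : G8'.vecMul (c ∘ i3) = 0 := by
    funext j
    exact (z3 _ _ _ (congrFun hU j) (congrFun hV j) (congrFun hW j)).2.2
  have ha := injG8 _ hu
  have hb := injG8 _ hv
  have hd := injG8p _ hw
  funext i
  rcases cover i with ⟨t, rfl⟩ | ⟨t, rfl⟩ | ⟨t, rfl⟩
  · exact congrFun ha t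
  · exact congrFun hb t
  · exact congrFun hd t

/-- The cubing construction yields a (24,12,8) code: dimension 12 and
minimum Hamming distance 8. -/
theorem golay_dim_and_min_distance :
    Module.finrank (ZMod 2) (code Ghat) = 12 ∧
    (∀ x ∈ code Ghat, x ≠ 0 → 8 ≤ hammingNorm x) ∧
    (∃ x ∈ code Ghat, x ≠ 0 ∧ hammingNorm x = 8) := by
  have hinj : Function.Injective Ghat.vecMulLinear := by
    intro c c' h
    have h0 : Ghat.vecMul (c - c') = 0 := by
      have h2 : Ghat.vecMulLinear (c - c') = 0 := by rw [map_sub, h, sub_self]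
      simpa only [Matrix.vecMulLinear_apply] using h2
    exact sub_eq_zero.mp (vecMul_zero_imp _ h0)
  refine ⟨?_, ?_, ?_⟩
  · rw [show code Ghat = LinearMap.range Ghat.vecMulLinear from rfl,
      LinearMap.finrank_range_of_inj hinj, Module.finrank_pi]
    simp
  · rintro x ⟨c, rfl⟩ hne
    rw [Matrix.vecMulLinear_apply] at hne ⊢
    have hnz : hammingNorm (Ghat.vecMul c) ≠ 0 := by
      rw [hammingNorm_eq_zero.ne]; exact hne
    rw [decomp c, hn_glue] at hnz ⊢
    exact bigcheck _ (mem_S8 _) _ (mem_S8 _) _ (mem_S8p _) hnz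
  · refine ⟨Ghat.vecMulLinear (fun i => if i = 0 then 1 else 0),
      ⟨_, rfl⟩, ?_, ?_⟩
    · rw [Matrix.vecMulLinear_apply]
      decide
    · rw [Matrix.vecMulLinear_apply]
      decide
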